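/- For n \ge 4 and m = 2^{n-1}, the closed formula gives ex_{Q_{n,2}}(2^{n-1}) = (n-1)2^{n-1} + 2 \cdot 2^{n-1} - 2^{n-1} = n \cdot 2^{n-1}, and more generally ex_{Q_{n,2}}(m) \le (t+1)m for all 1 \le m \le 2^t with 0 \le t \le n. -/
import Mathlib


/-- Closed-form hypercube edge-isoperimetric function: for `m` with binary expansion
`m = 2^{t_0} + ... + 2^{t_s}` with `t_0 > ... > t_s`, this equals
`∑ t_i 2^{t_i} + ∑ 2 i 2^{t_i}`. -/
def ex : ℕ → ℕ
  | 0 => 0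
  | (m+1) =>
      Nat.log2 (m+1) * 2 ^ Nat.log2 (m+1) + 2 * ((m+1) - 2 ^ Nat.log2 (m+1))
        + ex ((m+1) - 2 ^ Nat.log2 (m+1))
decreasing_by
  exact Nat.sub_lt (Nat.succ_pos m) (Nat.two_pow_pos _)

/-- The full closed formula of Lemma 2 for `ex_m(Q_{n,2})`, `1 ≤ m ≤ 2^n`:
`ex m + ⌊m/2^{n-1}⌋·2^{n-1} + 2·[m - ⌊m/2^{n-1}⌋·2^{n-1} - 2^{n-2}]⁺`. -/
def exQ (n m : ℕ) : ℤ :=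
  (ex m : ℤ) + (m / 2 ^ (n-1) : ℕ) * 2 ^ (n-1)
    + 2 * max ((m : ℤ) - (m / 2 ^ (n-1) : ℕ) * 2 ^ (n-1) - 2 ^ (n-2)) 0

lemma ex_two_pow (k : ℕ) : ex (2 ^ k) = k * 2 ^ k := by
  obtain ⟨m, hm⟩ : ∃ m, 2 ^ k = m + 1 := ⟨2 ^ k - 1, by have := Nat.two_pow_pos k; omega⟩
  rw [hm, ex, ← hm, Nat.log2_two_pow, Nat.sub_self, ex]
  ring

lemma ex_le (t : ℕ) : ∀ m : ℕ, m ≤ 2 ^ t → ex m ≤ t * m := by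
  induction t with
  | zero =>
    intro m hm
    interval_cases m
    · simp [ex]
    · rw [ex]; simp [show Nat.log2 1 = 0 by simpa using Nat.log2_two_pow (n := 0), ex]
  | succ t ih =>
    intro m hm
    rcases Nat.eq_zero_or_pos m with rfl | hm1
    · simp [ex]
    obtain ⟨m', hm'⟩ : ∃ m', m = m' + 1 := ⟨m - 1, by omega⟩
    subst hm'
    rw [ex]
    set L := Nat.log2 (m' + 1) with hL
    have h1 : 2 ^ L ≤ m' + 1 := Nat.log2_self_le (by omega)
    have h2 : m' + 1 < 2 ^ (L + 1) := Nat.lt_log2_self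
    have hr : m' + 1 - 2 ^ L < 2 ^ L := by
      have : 2 ^ (L + 1) = 2 ^ L + 2 ^ L := by ring
      omega
    have hLt : L ≤ t + 1 := by
      by_contra h
      have : 2 ^ (t + 1) < 2 ^ L := Nat.pow_lt_pow_right (by norm_num) (by omega)
      omega
    rcases Nat.eq_or_lt_of_le hLt with heq | hlt
    · -- L = t + 1, so m = 2^L and remainder is 0
      have hm2 : m' + 1 = 2 ^ L := by rw [heq] at h1 ⊢; omega
      rw [hm2, Nat.sub_self, ex, heq]
      simp
    · -- L ≤ t
      have hLe : L ≤ t := by omega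
      have hih : ex (m' + 1 - 2 ^ L) ≤ t * (m' + 1 - 2 ^ L) := by
        apply ih
        exact le_trans (Nat.le_of_lt hr) (Nat.pow_le_pow_right (by norm_num) hLe)
      have h2r : 2 * (m' + 1 - 2 ^ L) ≤ m' + 1 := by omega
      have hmul : L * 2 ^ L ≤ t * 2 ^ L := Nat.mul_le_mul_right _ hLe
      have hsum : 2 ^ L + (m' + 1 - 2 ^ L) = m' + 1 := by omega
      calc L * 2 ^ L + 2 * (m' + 1 - 2 ^ L) + ex (m' + 1 - 2 ^ L)
          ≤ t * 2 ^ L + (m' + 1) + t * (m' + 1 - 2 ^ L) := by omega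
        _ = t * (2 ^ L + (m' + 1 - 2 ^ L)) + (m' + 1) := by ring
        _ = t * (m' + 1) + (m' + 1) := by rw [hsum]
        _ = (t + 1) * (m' + 1) := by ring

/-- Lemma 3 (second part), specialized to `Q_{n,2}` via the closed formula: for `n ≥ 4`,
`ex_{Q_{n,2}}(2^{n-1}) = n·2^{n-1}`, and `ex_{Q_{n,2}}(m) ≤ (t+1) m` for all
`1 ≤ m ≤ 2^t` with `0 ≤ t ≤ n`. -/
theorem exQ_bound (n : ℕ) (hn : 4 ≤ n) :
    exQ n (2 ^ (n-1)) = (n : ℤ) * 2 ^ (n-1) ∧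
    ∀ t m : ℕ, t ≤ n → 1 ≤ m → m ≤ 2 ^ t → exQ n m ≤ ((t : ℤ) + 1) * m := by
  constructor
  · -- exact value at m = 2^(n-1)
    unfold exQ
    have hdiv : 2 ^ (n - 1) / 2 ^ (n - 1) = 1 := Nat.div_self (Nat.two_pow_pos _)
    rw [hdiv, ex_two_pow]
    have hpos : (0:ℤ) < 2 ^ (n - 2) := by positivity
    have hmax : max ((2 ^ (n-1) : ℕ) - (1:ℕ) * 2 ^ (n-1) - 2 ^ (n-2) : ℤ) 0 = 0 := by
      apply max_eq_right
      push_cast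
      linarith
    rw [hmax]
    have hcast : ((n - 1 : ℕ) : ℤ) = (n : ℤ) - 1 := by
      have : 1 ≤ n := by omega
      push_cast [this]; ring
    push_cast
    rw [hcast]
    ring
  · intro t m htn hm1 hmt
    unfold exQ
    set q : ℕ := m / 2 ^ (n - 1) with hq
    have hqle : q * 2 ^ (n - 1) ≤ m := Nat.div_mul_le_self m _
    have hrlt : m - q * 2 ^ (n - 1) < 2 ^ (n - 1) := by
      have := Nat.mod_lt m (Nat.two_pow_pos (n-1))
      have hmod : m % 2 ^ (n-1) = m - q * 2 ^ (n-1) := by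
        rw [hq, Nat.mod_def, Nat.mul_comm]
      omega
    have hex : (ex m : ℤ) ≤ (t : ℤ) * m := by
      exact_mod_cast Nat.cast_le.mpr (ex_le t m hmt)
    have hpow : (2:ℤ) * 2 ^ (n - 2) = 2 ^ (n - 1) := by
      rw [← pow_succ']
      congr 1
      omega
    have hqle' : (q : ℤ) * 2 ^ (n-1) ≤ (m : ℤ) := by exact_mod_cast hqle
    have hcast1 : ((m - q * 2 ^ (n-1) : ℕ) : ℤ) = (m : ℤ) - (q : ℤ) * 2 ^ (n-1) := by
      rw [Nat.cast_sub hqle]; push_cast; ring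
    have hr' : (m : ℤ) - (q : ℤ) * 2 ^ (n-1) < 2 ^ (n-1) := by
      rw [← hcast1]; exact_mod_cast hrlt
    have key : (q : ℤ) * 2 ^ (n-1) + 2 * max ((m : ℤ) - q * 2 ^ (n-1) - 2 ^ (n-2)) 0 ≤ m := by
      rcases le_or_gt ((m : ℤ) - q * 2 ^ (n-1)) (2 ^ (n-2)) with h | h
      · rw [max_eq_right (by linarith)]
        linarith
      · rw [max_eq_left (by linarith)]
        linarith
    linarith
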